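/- Fix integers N_x, N_t ≥ 1 and K ≥ 2, set N = (N_x+1)(N_t+1). Let P_x = diag(p̂_0,…,p̂_{N_x}) and P_t be diagonal real matrices with strictly positive diagonal entries, let Q_x ∈ ℝ^{(N_x+1)×(N_x+1)} satisfy Q_x + Q_xᵀ = e_e e_eᵀ − e_w e_wᵀ and Q_t ∈ ℝ^{(N_t+1)×(N_t+1)} satisfy Q_t + Q_tᵀ = e_n e_nᵀ − e_s e_sᵀ, where e_w,e_e ∈ ℝ^{N_x+1} and e_s,e_n ∈ ℝ^{N_t+1} are the first/last standard basis vectors. Define P = P_t ⊗ P_x, D_x = I_t ⊗ (P_x⁻¹Q_x), D_t = (P_t⁻¹Q_t) ⊗ I_x, R_w = I_t ⊗ e_wᵀ, R_e = I_t ⊗ e_eᵀ, R_s = e_sᵀ ⊗ I_x, R_n = e_nᵀ ⊗ I_x. Let κ_max > 0, let κ⁽¹⁾,…,κ⁽ᴷ⁾ satisfy 0 < κ⁽ᵏ⁾ ≤ κ_max, and let h, g ∈ ℝ^{N_t+1}, q⁽¹⁾,…,q⁽ᴷ⁾ ∈ ℝ^{N_x+1} be given data. Suppose u⁽¹⁾,…,u⁽ᴷ⁾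 ∈ ℝ^N satisfy, for each k, (D_t − κ⁽ᵏ⁾D_x²)u⁽ᵏ⁾ = −S_w⁽ᵏ⁾ − S_e⁽ᵏ⁾ − S_0⁽ᵏ⁾ − S_Γ⁽ᵏ'ᵏ⁻¹⁾ − S_Γ⁽ᵏ'ᵏ⁺¹⁾, where S_0⁽ᵏ⁾ = σ₀P⁻¹R_sᵀP_x(R_s u⁽ᵏ⁾ − q⁽ᵏ⁾) for all k; S_w⁽¹⁾ = σ_w P⁻¹R_wᵀP_t(R_w u⁽¹⁾ − h) and S_w⁽ᵏ⁾ = 0 for k ≥ 2; S_e⁽ᴷ⁾ = σ_e P⁻¹R_eᵀP_t(R_e u⁽ᴷ⁾ − g) and S_e⁽ᵏ⁾ = 0 for k ≤ K−1; for 2 ≤ k ≤ K, S_Γ⁽ᵏ'ᵏ⁻¹⁾ = σ₁P⁻¹R_wᵀP_t(R_w u⁽ᵏ⁾ − R_e u⁽ᵏ⁻¹⁾) + σ₂P⁻¹R_wᵀP_t(κ⁽ᵏ⁾R_w D_x u⁽ᵏ⁾ − κ⁽ᵏ⁻¹⁾R_e D_x u⁽ᵏ⁻¹⁾) + τ₁κ⁽ᵏ⁾P⁻¹D_xᵀR_wᵀP_t(R_w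 u⁽ᵏ⁾ − R_e u⁽ᵏ⁻¹⁾), and S_Γ⁽¹'⁰⁾ = 0; for 1 ≤ k ≤ K−1, S_Γ⁽ᵏ'ᵏ⁺¹⁾ = σ₃P⁻¹R_eᵀP_t(R_e u⁽ᵏ⁾ − R_w u⁽ᵏ⁺¹⁾) + σ₄P⁻¹R_eᵀP_t(κ⁽ᵏ⁾R_e D_x u⁽ᵏ⁾ − κ⁽ᵏ⁺¹⁾R_w D_x u⁽ᵏ⁺¹⁾) + τ₂κ⁽ᵏ⁾P⁻¹D_xᵀR_eᵀP_t(R_e u⁽ᵏ⁾ − R_w u⁽ᵏ⁺¹⁾), and S_Γ⁽ᴷ'ᴷ⁺¹⁾ = 0. Assume the SAT parameters satisfy σ₀ > ½, σ_w ≥ κ_max/(2p̂_0), σ_e ≥ κ_max/(2p̂_{N_x}), σ₁ = σ₃ ≥ 0, and there exists s > 0 with σ₂ = s, σ₄ = 1+s, τ₁ = −(1+s), τ₂ = −s. Then the discrete energy estimate holds: Σ_{k=1}^{K} ‖R_n u⁽ᵏ⁾‖²_{P_x} ≤ (σ₀²/(2σ₀−1)) Σ_{k=1}^{K} ‖q⁽ᵏ⁾‖²_{P_x}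 + σ_w ‖h‖²_{P_t} + σ_e ‖g‖²_{P_t}. -/

import Mathlib

open Matrix Kronecker Finset

private lemma sbp_kron_left {m n : ℕ} (M : Matrix (Fin m) (Fin m) ℝ) (N : Matrix (Fin n) (Fin n) ℝ)
    (v w : Fin m × Fin n → ℝ) :
    v ⬝ᵥ (M ⊗ₖ N).mulVec w
      = ∑ j, ∑ j', M j j' * ((fun i => v (j, i)) ⬝ᵥ N.mulVec (fun i => w (j', i))) := by
  simp only [dotProduct, mulVec, kroneckerMap_apply, Fintype.sum_prod_type, Finset.mul_sum,
    Finset.sum_mul]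
  refine Finset.sum_congr rfl fun j _ => ?_
  rw [Finset.sum_comm]
  refine Finset.sum_congr rfl fun j' _ => ?_
  refine Finset.sum_congr rfl fun i _ => ?_
  refine Finset.sum_congr rfl fun i' _ => ?_
  ring

private lemma sbp_kron_right {m n : ℕ} (M : Matrix (Fin m) (Fin m) ℝ) (N : Matrix (Fin n) (Fin n) ℝ)
    (v w : Fin m × Fin n → ℝ) :
    v ⬝ᵥ (M ⊗ₖ N).mulVec w
      = ∑ i, ∑ i', N i i' * ((fun j => v (j, i)) ⬝ᵥ M.mulVec (fun j => w (j, i'))) := by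
  simp only [dotProduct, mulVec, kroneckerMap_apply, Fintype.sum_prod_type, Finset.mul_sum,
    Finset.sum_mul]
  rw [Finset.sum_comm]
  refine Finset.sum_congr rfl fun i _ => ?_
  conv_lhs => enter [2, j]; rw [Finset.sum_comm]
  rw [Finset.sum_comm]
  refine Finset.sum_congr rfl fun i' _ => ?_
  refine Finset.sum_congr rfl fun j _ => ?_
  refine Finset.sum_congr rfl fun j' _ => ?_
  ring

private lemma sbp_sat {ι α : Type*} [Fintype ι] [Fintype α] [DecidableEq ι]
    (P : Matrix ι ι ℝ) (hPinv : P * P⁻¹ = 1) (M : Matrix α ι ℝ) (N : Matrix α α ℝ)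
    (v : ι → ℝ) (x : α → ℝ) :
    v ⬝ᵥ P.mulVec ((P⁻¹ * Mᵀ * N).mulVec x) = M.mulVec v ⬝ᵥ N.mulVec x := by
  rw [Matrix.mulVec_mulVec, ← Matrix.mul_assoc, ← Matrix.mul_assoc, hPinv, Matrix.one_mul,
    ← Matrix.mulVec_mulVec, Matrix.dotProduct_mulVec, Matrix.vecMul_transpose]

private lemma sbp_dot_diag {n : ℕ} (d : Fin n → ℝ) (x y : Fin n → ℝ) :
    x ⬝ᵥ (Matrix.diagonal d).mulVec y = ∑ j, d j * (x j * y j) := by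
  simp [dotProduct, Matrix.mulVec_diagonal]
  exact Finset.sum_congr rfl fun j _ => by ring

private lemma sbp_std_sum {m : ℕ} (l : Fin m) (c : Fin m → Fin m → ℝ) :
    ∑ j, ∑ j', (Matrix.single l l (1:ℝ)) j j' * c j j' = c l l := by
  simp [Matrix.single, Matrix.of_apply, ite_and]

private lemma sbp_Icc (f : ℕ → ℝ) (K : ℕ) :
    ∑ k ∈ Finset.Icc 1 K, f k = ∑ j ∈ Finset.range K, f (j + 1) := by
  induction K with
  | zero => simp
  | succ n ih =>
      rw [Finset.sum_Icc_succ_top (Nat.le_add_left 1 n), ih, Finset.sum_range_succ]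

set_option maxHeartbeats 2000000 in
theorem stmt_15
    (Nx Nt K : ℕ) (hNx : 1 ≤ Nx) (hNt : 1 ≤ Nt) (hK : 2 ≤ K)
    (phat : Fin (Nx + 1) → ℝ) (qhat : Fin (Nt + 1) → ℝ)
    (hphat : ∀ i, 0 < phat i) (hqhat : ∀ j, 0 < qhat j)
    (Px : Matrix (Fin (Nx + 1)) (Fin (Nx + 1)) ℝ) (hPx : Px = Matrix.diagonal phat)
    (Pt : Matrix (Fin (Nt + 1)) (Fin (Nt + 1)) ℝ) (hPt : Pt = Matrix.diagonal qhat)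
    (Qx : Matrix (Fin (Nx + 1)) (Fin (Nx + 1)) ℝ)
    (hQx : Qx + Qxᵀ =
      Matrix.single (Fin.last Nx) (Fin.last Nx) (1 : ℝ)
        - Matrix.single 0 0 (1 : ℝ))
    (Qt : Matrix (Fin (Nt + 1)) (Fin (Nt + 1)) ℝ)
    (hQt : Qt + Qtᵀ =
      Matrix.single (Fin.last Nt) (Fin.last Nt) (1 : ℝ)
        - Matrix.single 0 0 (1 : ℝ))
    (P : Matrix (Fin (Nt + 1) × Fin (Nx + 1)) (Fin (Nt + 1) × Fin (Nx + 1)) ℝ)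
    (hP : P = Pt ⊗ₖ Px)
    (Dx Dt : Matrix (Fin (Nt + 1) × Fin (Nx + 1)) (Fin (Nt + 1) × Fin (Nx + 1)) ℝ)
    (hDx : Dx = (1 : Matrix (Fin (Nt + 1)) (Fin (Nt + 1)) ℝ) ⊗ₖ (Px⁻¹ * Qx))
    (hDt : Dt = (Pt⁻¹ * Qt) ⊗ₖ (1 : Matrix (Fin (Nx + 1)) (Fin (Nx + 1)) ℝ))
    (Rw Re : Matrix (Fin (Nt + 1)) (Fin (Nt + 1) × Fin (Nx + 1)) ℝ)
    (hRw : Rw = Matrix.of fun j pp => if pp.1 = j ∧ pp.2 = 0 then (1 : ℝ) else 0)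
    (hRe : Re = Matrix.of fun j pp => if pp.1 = j ∧ pp.2 = Fin.last Nx then (1 : ℝ) else 0)
    (Rs Rn : Matrix (Fin (Nx + 1)) (Fin (Nt + 1) × Fin (Nx + 1)) ℝ)
    (hRs : Rs = Matrix.of fun i pp => if pp.1 = 0 ∧ pp.2 = i then (1 : ℝ) else 0)
    (hRn : Rn = Matrix.of fun i pp => if pp.1 = Fin.last Nt ∧ pp.2 = i then (1 : ℝ) else 0)
    (κmax : ℝ) (hκmax : 0 < κmax)
    (κ : ℕ → ℝ) (hκ : ∀ k, 1 ≤ k → k ≤ K → 0 < κ k ∧ κ k ≤ κmax)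
    (h g : Fin (Nt + 1) → ℝ) (q : ℕ → Fin (Nx + 1) → ℝ)
    (σ₀ σw σe σ₁ σ₂ σ₃ σ₄ τ₁ τ₂ s : ℝ)
    (hσ₀ : 1 / 2 < σ₀)
    (hσw : κmax / (2 * phat 0) ≤ σw)
    (hσe : κmax / (2 * phat (Fin.last Nx)) ≤ σe)
    (hσ₁₃ : σ₁ = σ₃) (hσ₁nn : 0 ≤ σ₁)
    (hs : 0 < s) (hσ₂ : σ₂ = s) (hσ₄ : σ₄ = 1 + s)
    (hτ₁ : τ₁ = -(1 + s)) (hτ₂ : τ₂ = -s)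
    (u : ℕ → Fin (Nt + 1) × Fin (Nx + 1) → ℝ)
    (Sw Se S0 SΓm SΓp : ℕ → Fin (Nt + 1) × Fin (Nx + 1) → ℝ)
    -- initial-condition SAT on every element
    (hS0 : ∀ k, 1 ≤ k → k ≤ K →
      S0 k = σ₀ • (P⁻¹ * Rsᵀ * Px).mulVec (Rs.mulVec (u k) - q k))
    -- west boundary SAT on the first element only
    (hSw1 : Sw 1 = σw • (P⁻¹ * Rwᵀ * Pt).mulVec (Rw.mulVec (u 1) - h))
    (hSw0 : ∀ k, 2 ≤ k → k ≤ K → Sw k = 0)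
    -- east boundary SAT on the last element only
    (hSeK : Se K = σe • (P⁻¹ * Reᵀ * Pt).mulVec (Re.mulVec (u K) - g))
    (hSe0 : ∀ k, 1 ≤ k → k ≤ K - 1 → Se k = 0)
    -- left-interface SATs
    (hSΓm : ∀ k, 2 ≤ k → k ≤ K →
      SΓm k =
        σ₁ • (P⁻¹ * Rwᵀ * Pt).mulVec (Rw.mulVec (u k) - Re.mulVec (u (k - 1)))
        + σ₂ • (P⁻¹ * Rwᵀ * Pt).mulVec
            (κ k • Rw.mulVec (Dx.mulVec (u k))
              - κ (k - 1) • Re.mulVec (Dx.mulVec (u (k - 1))))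
        + (τ₁ * κ k) • (P⁻¹ * Dxᵀ * Rwᵀ * Pt).mulVec
            (Rw.mulVec (u k) - Re.mulVec (u (k - 1))))
    (hSΓm1 : SΓm 1 = 0)
    -- right-interface SATs
    (hSΓp : ∀ k, 1 ≤ k → k ≤ K - 1 →
      SΓp k =
        σ₃ • (P⁻¹ * Reᵀ * Pt).mulVec (Re.mulVec (u k) - Rw.mulVec (u (k + 1)))
        + σ₄ • (P⁻¹ * Reᵀ * Pt).mulVec
            (κ k • Re.mulVec (Dx.mulVec (u k))
              - κ (k + 1) • Rw.mulVec (Dx.mulVec (u (k + 1))))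
        + (τ₂ * κ k) • (P⁻¹ * Dxᵀ * Reᵀ * Pt).mulVec
            (Re.mulVec (u k) - Rw.mulVec (u (k + 1))))
    (hSΓpK : SΓp K = 0)
    -- the SBP–SAT scheme with zero source term on each element
    (hscheme : ∀ k, 1 ≤ k → k ≤ K →
      (Dt - κ k • (Dx * Dx)).mulVec (u k)
        = -(Sw k) - Se k - S0 k - SΓm k - SΓp k) :
    ∑ k ∈ Finset.Icc 1 K, Rn.mulVec (u k) ⬝ᵥ Px.mulVec (Rn.mulVec (u k))
      ≤ (σ₀ ^ 2 / (2 * σ₀ - 1)) *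
          ∑ k ∈ Finset.Icc 1 K, q k ⬝ᵥ Px.mulVec (q k)
        + σw * (h ⬝ᵥ Pt.mulVec h) + σe * (g ⬝ᵥ Pt.mulVec g) := by
  -- boundary restriction operators, componentwise
  have hRwv : ∀ v : Fin (Nt + 1) × Fin (Nx + 1) → ℝ, Rw.mulVec v = fun j => v (j, 0) := by
    intro v; funext j
    simp [hRw, mulVec, dotProduct, Fintype.sum_prod_type, ite_and]
  have hRev : ∀ v : Fin (Nt + 1) × Fin (Nx + 1) → ℝ,
      Re.mulVec v = fun j => v (j, Fin.last Nx) := by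
    intro v; funext j
    simp [hRe, mulVec, dotProduct, Fintype.sum_prod_type, ite_and]
  have hRsv : ∀ v : Fin (Nt + 1) × Fin (Nx + 1) → ℝ, Rs.mulVec v = fun i => v (0, i) := by
    intro v; funext i
    simp [hRs, mulVec, dotProduct, Fintype.sum_prod_type, ite_and]
  have hRnv : ∀ v : Fin (Nt + 1) × Fin (Nx + 1) → ℝ,
      Rn.mulVec v = fun i => v (Fin.last Nt, i) := by
    intro v; funext i
    simp [hRn, mulVec, dotProduct, Fintype.sum_prod_type, ite_and]
  -- invertibility
  have hPtinv : Pt * Pt⁻¹ = 1 := by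
    apply Matrix.mul_nonsing_inv
    rw [hPt, Matrix.det_diagonal]
    exact isUnit_iff_ne_zero.2 (Finset.prod_pos (fun j _ => hqhat j)).ne'
  have hPxinv : Px * Px⁻¹ = 1 := by
    apply Matrix.mul_nonsing_inv
    rw [hPx, Matrix.det_diagonal]
    exact isUnit_iff_ne_zero.2 (Finset.prod_pos (fun i _ => hphat i)).ne'
  have hPdiag : P = Matrix.diagonal (fun p : Fin (Nt + 1) × Fin (Nx + 1) => qhat p.1 * phat p.2) := by
    ext ⟨j, i⟩ ⟨j', i'⟩
    by_cases h1 : j = j' <;> by_cases h2 : i = i' <;>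
      simp [hP, hPt, hPx, kroneckerMap_apply, Matrix.diagonal, Prod.ext_iff, h1, h2, eq_comm]
  have hPinv : P * P⁻¹ = 1 := by
    apply Matrix.mul_nonsing_inv
    rw [hPdiag, Matrix.det_diagonal]
    exact isUnit_iff_ne_zero.2
      (Finset.prod_pos (fun p _ => mul_pos (hqhat p.1) (hphat p.2))).ne'
  -- Dx acts row-wise
  have hW : ∀ (v : Fin (Nt + 1) × Fin (Nx + 1) → ℝ) (j : Fin (Nt + 1)),
      (fun i => Dx.mulVec v (j, i)) = (Px⁻¹ * Qx).mulVec (fun i => v (j, i)) := by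
    intro v j; funext i
    simp [hDx, mulVec, dotProduct, kroneckerMap_apply, Fintype.sum_prod_type,
      Matrix.one_apply, ite_and]
  have hQxP : Px * (Px⁻¹ * Qx) = Qx := by
    rw [← Matrix.mul_assoc, hPxinv, Matrix.one_mul]
  -- energy identity in time
  have eDt : ∀ v : Fin (Nt + 1) × Fin (Nx + 1) → ℝ,
      2 * (v ⬝ᵥ P.mulVec (Dt.mulVec v))
        = (∑ i, phat i * (v (Fin.last Nt, i) * v (Fin.last Nt, i)))
          - (∑ i, phat i * (v (0, i) * v (0, i))) := by
    intro v
    have hPD : P * Dt = Qt ⊗ₖ Px := by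
      rw [hP, hDt, ← Matrix.mul_kronecker_mul, ← Matrix.mul_assoc, hPtinv, Matrix.one_mul,
        Matrix.mul_one]
    rw [Matrix.mulVec_mulVec, hPD, sbp_kron_left]
    set c : Fin (Nt + 1) → Fin (Nt + 1) → ℝ :=
      fun j j' => ∑ i, phat i * (v (j, i) * v (j', i)) with hc
    have hterm : ∀ j j' : Fin (Nt + 1),
        (fun i => v (j, i)) ⬝ᵥ Px.mulVec (fun i => v (j', i)) = c j j' := by
      intro j j'; rw [hPx, sbp_dot_diag]
    simp only [hterm]
    have csym : ∀ j j', c j j' = c j' j := by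
      intro j j'; simp only [hc]
      exact Finset.sum_congr rfl fun i _ => by ring
    have hflip : ∑ j, ∑ j', Qtᵀ j j' * c j j' = ∑ j, ∑ j', Qt j j' * c j j' := by
      rw [Finset.sum_comm]
      exact Finset.sum_congr rfl fun j _ => Finset.sum_congr rfl fun j' _ => by
        rw [Matrix.transpose_apply, csym j' j]
    have key : (∑ j, ∑ j', Qt j j' * c j j') + (∑ j, ∑ j', Qtᵀ j j' * c j j')
        = c (Fin.last Nt) (Fin.last Nt) - c 0 0 := by
      have e1 : (∑ j, ∑ j', Qt j j' * c j j') + (∑ j, ∑ j', Qtᵀ j j' * c j j')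
          = ∑ j, ∑ j', ((Qt + Qtᵀ) j j') * c j j' := by
        rw [← Finset.sum_add_distrib]
        refine Finset.sum_congr rfl fun j _ => ?_
        rw [← Finset.sum_add_distrib]
        refine Finset.sum_congr rfl fun j' _ => ?_
        rw [Matrix.add_apply]; ring
      rw [e1, hQt]
      simp only [Matrix.sub_apply, sub_mul, Finset.sum_sub_distrib]
      rw [sbp_std_sum, sbp_std_sum]
    have hgoal : 2 * (∑ j, ∑ j', Qt j j' * c j j')
        = c (Fin.last Nt) (Fin.last Nt) - c 0 0 := by linarith [hflip, key]
    rw [hgoal]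
  -- energy identity in space
  have eDx : ∀ v : Fin (Nt + 1) × Fin (Nx + 1) → ℝ,
      v ⬝ᵥ P.mulVec ((Dx * Dx).mulVec v)
        = (∑ j, qhat j * (v (j, Fin.last Nx) * Dx.mulVec v (j, Fin.last Nx)))
          - (∑ j, qhat j * (v (j, 0) * Dx.mulVec v (j, 0)))
          - ∑ j, qhat j * (∑ i, phat i * (Dx.mulVec v (j, i) * Dx.mulVec v (j, i))) := by
    intro v
    have hPDx : P * Dx = Pt ⊗ₖ Qx := by
      rw [hP, hDx, ← Matrix.mul_kronecker_mul, Matrix.mul_one, hQxP]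
    rw [← Matrix.mulVec_mulVec, Matrix.mulVec_mulVec (Dx.mulVec v) P Dx, hPDx, sbp_kron_right]
    set w := Dx.mulVec v with hw
    set d : Fin (Nx + 1) → Fin (Nx + 1) → ℝ :=
      fun i i' => ∑ j, qhat j * (v (j, i) * w (j, i')) with hd
    have hterm : ∀ i i' : Fin (Nx + 1),
        (fun j => v (j, i)) ⬝ᵥ Pt.mulVec (fun j => w (j, i')) = d i i' := by
      intro i i'; rw [hPt, sbp_dot_diag]
    simp only [hterm]
    have hQxd : Qx = Matrix.single (Fin.last Nx) (Fin.last Nx) (1 : ℝ)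
        - Matrix.single 0 0 (1 : ℝ) - Qxᵀ := eq_sub_of_add_eq hQx
    have hT : ∑ i, ∑ i', Qxᵀ i i' * d i i'
        = ∑ j, qhat j * (∑ i, phat i * (w (j, i) * w (j, i))) := by
      simp only [hd, Finset.mul_sum]
      rw [Finset.sum_comm]
      conv_lhs => enter [2, i']; rw [Finset.sum_comm]
      rw [Finset.sum_comm]
      refine Finset.sum_congr rfl fun j _ => ?_
      refine Finset.sum_congr rfl fun i' _ => ?_
      have hkey : ∑ i, Qx i' i * v (j, i) = phat i' * w (j, i') := by
        have e1 : Px.mulVec (fun i => w (j, i)) = Qx.mulVec (fun i => v (j, i)) := by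
          rw [hw, hW v j, Matrix.mulVec_mulVec, hQxP]
        have e2 := congrFun e1 i'
        rw [hPx, Matrix.mulVec_diagonal] at e2
        rw [e2]
        simp [mulVec, dotProduct]
      calc ∑ i, Qxᵀ i i' * (qhat j * (v (j, i) * w (j, i')))
          = (qhat j * w (j, i')) * ∑ i, Qx i' i * v (j, i) := by
            rw [Finset.mul_sum]
            exact Finset.sum_congr rfl fun i _ => by rw [Matrix.transpose_apply]; ring
        _ = qhat j * (phat i' * (w (j, i') * w (j, i'))) := by rw [hkey]; ring
    conv_lhs => rw [hQxd]
    simp only [Matrix.sub_apply, sub_mul, Finset.sum_sub_distrib]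
    rw [sbp_std_sum, sbp_std_sum, hT]
  -- restriction of Dx rows
  have hRwDx : ∀ v : Fin (Nt + 1) × Fin (Nx + 1) → ℝ,
      (Rw * Dx).mulVec v = fun j => Dx.mulVec v (j, 0) := by
    intro v; rw [← Matrix.mulVec_mulVec, hRwv]
  have hReDx : ∀ v : Fin (Nt + 1) × Fin (Nx + 1) → ℝ,
      (Re * Dx).mulVec v = fun j => Dx.mulVec v (j, Fin.last Nx) := by
    intro v; rw [← Matrix.mulVec_mulVec, hRev]
  -- scalar abbreviations
  set EN : ℕ → ℝ := fun k => ∑ i, phat i * (u k (Fin.last Nt, i) * u k (Fin.last Nt, i)) with hEN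
  set ES : ℕ → ℝ := fun k => ∑ i, phat i * (u k (0, i) * u k (0, i)) with hES
  set AAl : ℕ → ℝ := fun k => ∑ j, qhat j * (u k (j, 0) * Dx.mulVec (u k) (j, 0)) with hAAl
  set BBe : ℕ → ℝ :=
    fun k => ∑ j, qhat j * (u k (j, Fin.last Nx) * Dx.mulVec (u k) (j, Fin.last Nx)) with hBBe
  set WW : ℕ → ℝ :=
    fun k => ∑ j, qhat j * (∑ i, phat i * (Dx.mulVec (u k) (j, i) * Dx.mulVec (u k) (j, i)))
    with hWW
  set FL : ℕ → ℝ := fun k => -(2 * κ k) * AAl k - 2 * (u k ⬝ᵥ P.mulVec (Sw k))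
    - 2 * (u k ⬝ᵥ P.mulVec (SΓm k)) with hFL
  set FR : ℕ → ℝ := fun k => (2 * κ k) * BBe k - 2 * (u k ⬝ᵥ P.mulVec (Se k))
    - 2 * (u k ⬝ᵥ P.mulVec (SΓp k)) with hFR
  set I0 : ℕ → ℝ := fun k => ES k - 2 * (u k ⬝ᵥ P.mulVec (S0 k)) with hI0
  -- per-element energy identity
  have energy : ∀ k, 1 ≤ k → k ≤ K → EN k = I0 k + FL k + FR k - 2 * κ k * WW k := by
    intro k hk1 hkK
    have hsch := congrArg (fun z => u k ⬝ᵥ P.mulVec z) (hscheme k hk1 hkK)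
    simp only [Matrix.sub_mulVec, Matrix.smul_mulVec, Matrix.mulVec_sub,
      Matrix.mulVec_smul, Matrix.mulVec_neg, dotProduct_sub, dotProduct_neg,
      dotProduct_smul, smul_eq_mul] at hsch
    have e1 := eDt (u k)
    have e2 := eDx (u k)
    rw [e2] at hsch
    simp only [hEN, hES, hI0, hFL, hFR, hAAl, hBBe, hWW]
    linear_combination (2 : ℝ) * hsch - e1
  -- dot products with the SAT terms
  have dS0 : ∀ k, 1 ≤ k → k ≤ K → u k ⬝ᵥ P.mulVec (S0 k)
      = σ₀ * ∑ i, phat i * (u k (0, i) * (u k (0, i) - q k i)) := by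
    intro k hk1 hkK
    rw [hS0 k hk1 hkK, Matrix.mulVec_smul, dotProduct_smul, smul_eq_mul,
      sbp_sat P hPinv Rs Px (u k), hRsv, hPx, sbp_dot_diag]
    simp only [Pi.sub_apply]
  have dSw : u 1 ⬝ᵥ P.mulVec (Sw 1)
      = σw * ∑ j, qhat j * (u 1 (j, 0) * (u 1 (j, 0) - h j)) := by
    rw [hSw1, Matrix.mulVec_smul, dotProduct_smul, smul_eq_mul,
      sbp_sat P hPinv Rw Pt (u 1), hRwv, hPt, sbp_dot_diag]
    simp only [Pi.sub_apply]
  have dSe : u K ⬝ᵥ P.mulVec (Se K)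
      = σe * ∑ j, qhat j * (u K (j, Fin.last Nx) * (u K (j, Fin.last Nx) - g j)) := by
    rw [hSeK, Matrix.mulVec_smul, dotProduct_smul, smul_eq_mul,
      sbp_sat P hPinv Re Pt (u K), hRev, hPt, sbp_dot_diag]
    simp only [Pi.sub_apply]
  have dSm : ∀ k, 2 ≤ k → k ≤ K → u k ⬝ᵥ P.mulVec (SΓm k)
      = σ₁ * (∑ j, qhat j * (u k (j, 0) * (u k (j, 0) - u (k - 1) (j, Fin.last Nx))))
        + σ₂ * (∑ j, qhat j * (u k (j, 0) *
            (κ k * Dx.mulVec (u k) (j, 0) - κ (k - 1) * Dx.mulVec (u (k - 1)) (j, Fin.last Nx))))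
        + (τ₁ * κ k) * (∑ j, qhat j *
            (Dx.mulVec (u k) (j, 0) * (u k (j, 0) - u (k - 1) (j, Fin.last Nx)))) := by
    intro k hk2 hkK
    have hDR : P⁻¹ * Dxᵀ * Rwᵀ * Pt = P⁻¹ * (Rw * Dx)ᵀ * Pt := by
      rw [Matrix.transpose_mul, ← Matrix.mul_assoc]
    rw [hSΓm k hk2 hkK, hDR]
    simp only [Matrix.mulVec_add, dotProduct_add, Matrix.mulVec_smul,
      dotProduct_smul, smul_eq_mul, sbp_sat P hPinv Rw Pt,
      sbp_sat P hPinv (Rw * Dx) Pt]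
    simp only [hRwv, hRev, hRwDx, hReDx, hPt, sbp_dot_diag, Pi.sub_apply, Pi.smul_apply,
      smul_eq_mul]
  have dSp : ∀ k, 1 ≤ k → k ≤ K - 1 → u k ⬝ᵥ P.mulVec (SΓp k)
      = σ₃ * (∑ j, qhat j * (u k (j, Fin.last Nx) * (u k (j, Fin.last Nx) - u (k + 1) (j, 0))))
        + σ₄ * (∑ j, qhat j * (u k (j, Fin.last Nx) *
            (κ k * Dx.mulVec (u k) (j, Fin.last Nx) - κ (k + 1) * Dx.mulVec (u (k + 1)) (j, 0))))
        + (τ₂ * κ k) * (∑ j, qhat j *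
            (Dx.mulVec (u k) (j, Fin.last Nx) * (u k (j, Fin.last Nx) - u (k + 1) (j, 0)))) := by
    intro k hk1 hkK
    have hDR : P⁻¹ * Dxᵀ * Reᵀ * Pt = P⁻¹ * (Re * Dx)ᵀ * Pt := by
      rw [Matrix.transpose_mul, ← Matrix.mul_assoc]
    rw [hSΓp k hk1 hkK, hDR]
    simp only [Matrix.mulVec_add, dotProduct_add, Matrix.mulVec_smul,
      dotProduct_smul, smul_eq_mul, sbp_sat P hPinv Re Pt,
      sbp_sat P hPinv (Re * Dx) Pt]
    simp only [hRwv, hRev, hRwDx, hReDx, hPt, sbp_dot_diag, Pi.sub_apply, Pi.smul_apply,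
      smul_eq_mul]
  -- positivity facts
  have hWWnn : ∀ k, 0 ≤ WW k := by
    intro k; simp only [hWW]
    refine Finset.sum_nonneg fun j _ => mul_nonneg (hqhat j).le ?_
    exact Finset.sum_nonneg fun i _ => mul_nonneg (hphat i).le (mul_self_nonneg _)
  have hWWw : ∀ k,
      ∑ j, qhat j * (phat 0 * (Dx.mulVec (u k) (j, 0) * Dx.mulVec (u k) (j, 0))) ≤ WW k := by
    intro k; simp only [hWW]
    refine Finset.sum_le_sum fun j _ => mul_le_mul_of_nonneg_left ?_ (hqhat j).le
    exact Finset.single_le_sum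
      (f := fun i => phat i * (Dx.mulVec (u k) (j, i) * Dx.mulVec (u k) (j, i)))
      (fun i _ => mul_nonneg (hphat i).le (mul_self_nonneg _)) (Finset.mem_univ 0)
  have hWWe : ∀ k,
      ∑ j, qhat j * (phat (Fin.last Nx) *
        (Dx.mulVec (u k) (j, Fin.last Nx) * Dx.mulVec (u k) (j, Fin.last Nx))) ≤ WW k := by
    intro k; simp only [hWW]
    refine Finset.sum_le_sum fun j _ => mul_le_mul_of_nonneg_left ?_ (hqhat j).le
    exact Finset.single_le_sum
      (f := fun i => phat i * (Dx.mulVec (u k) (j, i) * Dx.mulVec (u k) (j, i)))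
      (fun i _ => mul_nonneg (hphat i).le (mul_self_nonneg _)) (Finset.mem_univ (Fin.last Nx))
  have hp0' : (0:ℝ) < 2 * phat 0 := by have := hphat 0; linarith
  have hpN' : (0:ℝ) < 2 * phat (Fin.last Nx) := by have := hphat (Fin.last Nx); linarith
  have hσwpos : 0 < σw := lt_of_lt_of_le (div_pos hκmax hp0') hσw
  have hσepos : 0 < σe := lt_of_lt_of_le (div_pos hκmax hpN') hσe
  have hκw : κmax ≤ σw * (2 * phat 0) := (div_le_iff₀ hp0').1 hσw
  have hκe : κmax ≤ σe * (2 * phat (Fin.last Nx)) := (div_le_iff₀ hpN').1 hσe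
  -- (a) initial-data bound
  have bndI0 : ∀ k, 1 ≤ k → k ≤ K →
      I0 k ≤ σ₀ ^ 2 / (2 * σ₀ - 1) * ∑ i, phat i * (q k i * q k i) := by
    intro k hk1 hkK
    have h2σ : (0:ℝ) < 2 * σ₀ - 1 := by linarith
    have hcc : σ₀ ^ 2 / (2 * σ₀ - 1) * (2 * σ₀ - 1) = σ₀ ^ 2 := div_mul_cancel₀ _ h2σ.ne'
    simp only [hI0, hES]
    rw [dS0 k hk1 hkK]
    simp only [Finset.mul_sum]
    rw [← Finset.sum_sub_distrib]
    refine Finset.sum_le_sum fun i _ => ?_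
    have hp := hphat i
    have hcc2 := congrArg (· * (phat i * (q k i * q k i))) hcc
    nlinarith [mul_nonneg hp.le (sq_nonneg ((2*σ₀ - 1) * u k (0, i) - σ₀ * q k i)), h2σ, hcc2,
      mul_pos hp h2σ]
  -- (b) west boundary bound
  have bndW : FL 1 - 2 * κ 1 * WW 1 ≤ σw * ∑ j, qhat j * (h j * h j) := by
    obtain ⟨hκ1pos, hκ1max⟩ := hκ 1 le_rfl (by omega)
    have hp0 := hphat 0
    have step1 : FL 1 - 2 * κ 1 * WW 1 ≤ FL 1
        - 2 * κ 1 * ∑ j, qhat j * (phat 0 * (Dx.mulVec (u 1) (j, 0) * Dx.mulVec (u 1) (j, 0))) :=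
      sub_le_sub_left (mul_le_mul_of_nonneg_left (hWWw 1) (by positivity)) _
    refine le_trans step1 ?_
    simp only [hFL, hAAl]
    rw [dSw, hSΓm1]
    simp only [Matrix.mulVec_zero, dotProduct_zero, mul_zero, sub_zero]
    simp only [Finset.mul_sum]
    rw [← Finset.sum_sub_distrib, ← Finset.sum_sub_distrib]
    refine Finset.sum_le_sum fun j _ => ?_
    nlinarith [mul_nonneg (mul_nonneg (hqhat j).le hκ1pos.le)
        (sq_nonneg (u 1 (j, 0) + 2 * phat 0 * Dx.mulVec (u 1) (j, 0))),
      mul_nonneg (mul_nonneg (hqhat j).le (by positivity : (0:ℝ) ≤ 2 * phat 0 * σw))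
        (sq_nonneg (u 1 (j, 0) - h j)),
      mul_nonneg (mul_nonneg (hqhat j).le (sub_nonneg.2 (hκ1max.trans hκw)))
        (sq_nonneg (u 1 (j, 0))),
      hp0, hqhat j, hσwpos]
  -- (c) east boundary bound
  have bndE : FR K - 2 * κ K * WW K ≤ σe * ∑ j, qhat j * (g j * g j) := by
    obtain ⟨hκKpos, hκKmax⟩ := hκ K (by omega) le_rfl
    have hpN := hphat (Fin.last Nx)
    have step1 : FR K - 2 * κ K * WW K ≤ FR K
        - 2 * κ K * ∑ j, qhat j * (phat (Fin.last Nx) *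
            (Dx.mulVec (u K) (j, Fin.last Nx) * Dx.mulVec (u K) (j, Fin.last Nx))) :=
      sub_le_sub_left (mul_le_mul_of_nonneg_left (hWWe K) (by positivity)) _
    refine le_trans step1 ?_
    simp only [hFR, hBBe]
    rw [dSe, hSΓpK]
    simp only [Matrix.mulVec_zero, dotProduct_zero, mul_zero, sub_zero]
    simp only [Finset.mul_sum]
    rw [← Finset.sum_sub_distrib, ← Finset.sum_sub_distrib]
    refine Finset.sum_le_sum fun j _ => ?_
    nlinarith [mul_nonneg (mul_nonneg (hqhat j).le hκKpos.le)
        (sq_nonneg (u K (j, Fin.last Nx) - 2 * phat (Fin.last Nx) * Dx.mulVec (u K) (j, Fin.last Nx))),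
      mul_nonneg (mul_nonneg (hqhat j).le (by positivity : (0:ℝ) ≤ 2 * phat (Fin.last Nx) * σe))
        (sq_nonneg (u K (j, Fin.last Nx) - g j)),
      mul_nonneg (mul_nonneg (hqhat j).le (sub_nonneg.2 (hκKmax.trans hκe)))
        (sq_nonneg (u K (j, Fin.last Nx))),
      hpN, hqhat j, hσepos]
  -- (d) interface bound
  have bndPair : ∀ k, 1 ≤ k → k ≤ K - 1 → FR k + FL (k + 1) ≤ 0 := by
    intro k hk1 hkK1
    have hk2 : 2 ≤ k + 1 := by omega
    have hkK : k + 1 ≤ K := by omega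
    have e1 := dSp k hk1 hkK1
    have e2 := dSm (k + 1) hk2 hkK
    simp only [Nat.add_sub_cancel] at e2
    have eSe : u k ⬝ᵥ P.mulVec (Se k) = 0 := by
      rw [hSe0 k hk1 hkK1, Matrix.mulVec_zero, dotProduct_zero]
    have eSw : u (k + 1) ⬝ᵥ P.mulVec (Sw (k + 1)) = 0 := by
      rw [hSw0 (k + 1) hk2 hkK, Matrix.mulVec_zero, dotProduct_zero]
    have key : FR k + FL (k + 1) = ∑ j, qhat j *
        (-2 * σ₁ * ((u (k + 1) (j, 0) - u k (j, Fin.last Nx)) ^ 2)) := by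
      simp only [hFR, hFL, hAAl, hBBe]
      rw [e1, e2, eSe, eSw, hσ₂, hσ₄, hτ₁, hτ₂, ← hσ₁₃]
      simp only [mul_zero, sub_zero, mul_add, mul_sub, Finset.mul_sum]
      simp only [← Finset.sum_add_distrib, ← Finset.sum_sub_distrib]
      refine Finset.sum_congr rfl fun j _ => ?_
      ring
    rw [key]
    refine Finset.sum_nonpos fun j _ => ?_
    have h1 := sq_nonneg (u (k + 1) (j, 0) - u k (j, Fin.last Nx))
    nlinarith [mul_nonneg (mul_nonneg (hqhat j).le hσ₁nn) h1]
  have hmid : ∀ k, 1 ≤ k → k ≤ K → 0 ≤ 2 * κ k * WW k := by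
    intro k hk1 hkK
    have := (hκ k hk1 hkK).1
    have := hWWnn k
    positivity
  -- assembly
  obtain ⟨M, rfl⟩ : ∃ M, K = M + 2 := ⟨K - 2, by omega⟩
  have idx : ∀ j : ℕ, j + 1 + 1 = j + 2 := fun j => rfl
  have gl : ∑ k ∈ Finset.Icc 1 (M + 2), Rn.mulVec (u k) ⬝ᵥ Px.mulVec (Rn.mulVec (u k))
      = ∑ j ∈ Finset.range (M + 2), EN (j + 1) := by
    rw [sbp_Icc]
    refine Finset.sum_congr rfl fun j _ => ?_
    rw [hRnv (u (j + 1)), hPx, sbp_dot_diag]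
  have gq : ∑ k ∈ Finset.Icc 1 (M + 2), q k ⬝ᵥ Px.mulVec (q k)
      = ∑ j ∈ Finset.range (M + 2), ∑ i, phat i * (q (j + 1) i * q (j + 1) i) := by
    rw [sbp_Icc]
    exact Finset.sum_congr rfl fun j _ => by rw [hPx, sbp_dot_diag]
  have gh : h ⬝ᵥ Pt.mulVec h = ∑ j, qhat j * (h j * h j) := by rw [hPt, sbp_dot_diag]
  have gg2 : g ⬝ᵥ Pt.mulVec g = ∑ j, qhat j * (g j * g j) := by rw [hPt, sbp_dot_diag]
  rw [gl, gq, gh, gg2]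
  have split : ∑ j ∈ Finset.range (M + 2), EN (j + 1)
      = (∑ j ∈ Finset.range (M + 2), I0 (j + 1))
        + ((∑ j ∈ Finset.range (M + 2), FL (j + 1)) + (∑ j ∈ Finset.range (M + 2), FR (j + 1))
          - ∑ j ∈ Finset.range (M + 2), 2 * κ (j + 1) * WW (j + 1)) := by
    rw [← Finset.sum_add_distrib, ← Finset.sum_sub_distrib, ← Finset.sum_add_distrib]
    refine Finset.sum_congr rfl fun j hj => ?_
    have hj2 := Finset.mem_range.1 hj
    rw [energy (j + 1) (by omega) (by omega)]
    ring
  rw [split]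
  have A1 : ∑ j ∈ Finset.range (M + 2), I0 (j + 1)
      ≤ σ₀ ^ 2 / (2 * σ₀ - 1)
        * ∑ j ∈ Finset.range (M + 2), ∑ i, phat i * (q (j + 1) i * q (j + 1) i) := by
    rw [Finset.mul_sum]
    exact Finset.sum_le_sum fun j hj =>
      bndI0 (j + 1) (by omega) (by have := Finset.mem_range.1 hj; omega)
  have hFLs : ∑ j ∈ Finset.range (M + 2), FL (j + 1)
      = FL 1 + ∑ j ∈ Finset.range (M + 1), FL (j + 2) := by
    rw [Finset.sum_range_succ' (fun j => FL (j + 1)) (M + 1)]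
    simp only [idx]
    ring
  have hFRs : ∑ j ∈ Finset.range (M + 2), FR (j + 1)
      = (∑ j ∈ Finset.range (M + 1), FR (j + 1)) + FR (M + 2) := by
    rw [Finset.sum_range_succ]
  have hWWs : ∑ j ∈ Finset.range (M + 2), 2 * κ (j + 1) * WW (j + 1)
      = 2 * κ 1 * WW 1 + (∑ j ∈ Finset.range M, 2 * κ (j + 2) * WW (j + 2))
        + 2 * κ (M + 2) * WW (M + 2) := by
    rw [Finset.sum_range_succ, Finset.sum_range_succ' (fun j => 2 * κ (j + 1) * WW (j + 1)) M]
    simp only [idx]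
    ring
  have hpairs : (∑ j ∈ Finset.range (M + 1), FR (j + 1))
      + (∑ j ∈ Finset.range (M + 1), FL (j + 2)) ≤ 0 := by
    rw [← Finset.sum_add_distrib]
    refine Finset.sum_nonpos fun j hj => ?_
    have hj2 := Finset.mem_range.1 hj
    have := bndPair (j + 1) (by omega) (by omega)
    simpa [idx] using this
  have hmids : 0 ≤ ∑ j ∈ Finset.range M, 2 * κ (j + 2) * WW (j + 2) :=
    Finset.sum_nonneg fun j hj =>
      hmid (j + 2) (by omega) (by have := Finset.mem_range.1 hj; omega)
  linarith [A1, bndW, bndE, hpairs, hmids, hFLs, hFRs, hWWs]
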